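/- Fix r₀ > 0 and define μ : ℝ≥0 → ℝ≥0 by cosh(μ(t)) = cosh²(r₀) − sinh²(r₀)·cos( min{π, t/sinh(r₀)} ). Then μ is nondecreasing, μ(t) ≤ t for all t ≥ 0, and μ is constant equal to 2r₀ on [π sinh r₀, ∞). -/
import Mathlib


open Real

lemma quad_le_cosh (t : ℝ) (ht : 0 ≤ t) : 1 + t ^ 2 / 2 ≤ Real.cosh t := by
  have h2 : t / 2 ≤ Real.sinh (t / 2) := by
    rcases eq_or_lt_of_le (by linarith : (0:ℝ) ≤ t / 2) with h | h
    · simp [← h]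
    · exact (Real.self_lt_sinh_iff.2 h).le
  have hs : 0 ≤ t / 2 := by linarith
  have : Real.cosh t = 1 + 2 * Real.sinh (t / 2) ^ 2 := by
    have := Real.cosh_two_mul (t / 2)
    have h' : 2 * (t / 2) = t := by ring
    rw [h'] at this
    rw [this, Real.cosh_sq']
    ring
  rw [this]
  nlinarith

/-- Properties of the comparison function μ of the hyperbolic cone of radius r₀:
μ is nondecreasing on [0,∞), μ(t) ≤ t, and μ ≡ 2r₀ on [π sinh r₀, ∞). -/
theorem cone_comparison_function_properties
    (r₀ : ℝ) (hr₀ : 0 < r₀) (μ : ℝ → ℝ)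
    (hμ_nonneg : ∀ t : ℝ, 0 ≤ t → 0 ≤ μ t)
    (hμ : ∀ t : ℝ, 0 ≤ t →
      Real.cosh (μ t) =
        Real.cosh r₀ ^ 2 -
          Real.sinh r₀ ^ 2 * Real.cos (min π (t / Real.sinh r₀))) :
    (MonotoneOn μ (Set.Ici (0 : ℝ))) ∧
    (∀ t : ℝ, 0 ≤ t → μ t ≤ t) ∧
    (∀ t : ℝ, π * Real.sinh r₀ ≤ t → μ t = 2 * r₀) := by
  have hs : 0 < Real.sinh r₀ := Real.sinh_pos_iff.2 hr₀
  refine ⟨?_, ?_, ?_⟩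
  · intro a ha b hb hab
    simp only [Set.mem_Ici] at ha hb
    have hθa : 0 ≤ min π (a / Real.sinh r₀) :=
      le_min Real.pi_pos.le (div_nonneg ha hs.le)
    have hθb : min π (b / Real.sinh r₀) ≤ π := min_le_left _ _
    have hθab : min π (a / Real.sinh r₀) ≤ min π (b / Real.sinh r₀) :=
      min_le_min le_rfl (by gcongr)
    have hcos : Real.cos (min π (b / Real.sinh r₀)) ≤
        Real.cos (min π (a / Real.sinh r₀)) :=
      Real.cos_le_cos_of_nonneg_of_le_pi hθa hθb hθab
    have : Real.cosh (μ a) ≤ Real.cosh (μ b) := by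
      rw [hμ a ha, hμ b hb]
      nlinarith [sq_nonneg (Real.sinh r₀)]
    have := Real.cosh_le_cosh.1 this
    rwa [abs_of_nonneg (hμ_nonneg a ha), abs_of_nonneg (hμ_nonneg b hb)] at this
  · intro t ht
    set θ := min π (t / Real.sinh r₀) with hθdef
    have hθ0 : 0 ≤ θ := le_min Real.pi_pos.le (div_nonneg ht hs.le)
    have hθt : Real.sinh r₀ * θ ≤ t := by
      have : θ ≤ t / Real.sinh r₀ := min_le_right _ _
      calc Real.sinh r₀ * θ ≤ Real.sinh r₀ * (t / Real.sinh r₀) := by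
            exact mul_le_mul_of_nonneg_left this hs.le
        _ = t := by field_simp
    have hc : 1 - θ ^ 2 / 2 ≤ Real.cos θ := Real.one_sub_sq_div_two_le_cos
    have h1 : Real.cosh (μ t) ≤ Real.cosh t := by
      rw [hμ t ht]
      have h2 := quad_le_cosh t ht
      have hsq : Real.cosh r₀ ^ 2 = 1 + Real.sinh r₀ ^ 2 := Real.cosh_sq' r₀
      have hprod : (Real.sinh r₀ * θ) ^ 2 ≤ t ^ 2 := by
        apply pow_le_pow_left₀ (by positivity) hθt
      have hcos2 : Real.sinh r₀ ^ 2 * (1 - Real.cos θ) ≤ Real.sinh r₀ ^ 2 * (θ ^ 2 / 2) :=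
        mul_le_mul_of_nonneg_left (by linarith) (sq_nonneg _)
      nlinarith
    have := Real.cosh_le_cosh.1 h1
    rwa [abs_of_nonneg (hμ_nonneg t ht), abs_of_nonneg ht] at this
  · intro t ht
    have ht0 : 0 ≤ t := le_trans (by positivity) ht
    have hmin : min π (t / Real.sinh r₀) = π := by
      apply min_eq_left
      rw [le_div_iff₀ hs]
      linarith [ht]
    have h1 : Real.cosh (μ t) = Real.cosh (2 * r₀) := by
      rw [hμ t ht0, hmin, Real.cos_pi, Real.cosh_two_mul]
      ring
    have h2 := Real.cosh_le_cosh.1 h1.le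
    have h3 := Real.cosh_le_cosh.1 h1.ge
    rw [abs_of_nonneg (hμ_nonneg t ht0), abs_of_nonneg (by linarith : (0:ℝ) ≤ 2 * r₀)] at h2 h3
    linarith
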